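/- Let L be a non-degenerate even lattice of finite rank which is not positive definite, and let λ be any element of ℚ ⊗_ℤ L. Then for every rational number k, the set {β ∈ λ + L : ⟨β, β⟩ ≤ k} is infinite, where λ + L denotes the coset of L in ℚ ⊗_ℤ L through λ. -/

import Mathlib

open scoped TensorProduct

lemma exists_seq_aux' (a c d k : ℚ) (h : a < 0 ∨ (a = 0 ∧ c ≠ 0)) :
    ∃ g : ℕ → ℤ, Function.Injective g ∧
      ∀ m : ℕ, a * (g m : ℚ)^2 + 2*c*(g m : ℚ) + d ≤ k := by
  rcases h with ha | ⟨ha, hc⟩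
  · set N : ℕ := max 1 ⌈(2*c + |d - k| + 1)/(-a)⌉₊ with hN
    refine ⟨fun m => (N : ℤ) + m, ?_, ?_⟩
    · intro m m' h; simp only at h; omega
    · intro m
      simp only
      set n : ℚ := (((N : ℤ) + m : ℤ) : ℚ) with hn
      have hNge : (1:ℚ) ≤ (N:ℚ) := by exact_mod_cast le_max_left 1 ⌈(2*c + |d - k| + 1)/(-a)⌉₊
      have hm : (0:ℚ) ≤ (m:ℚ) := Nat.cast_nonneg m
      have hn1 : (1 : ℚ) ≤ n := by rw [hn]; push_cast; linarith
      have hnN : ((2*c + |d - k| + 1)/(-a)) ≤ n := by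
        have h1 : ((2*c + |d - k| + 1)/(-a)) ≤ (⌈(2*c + |d - k| + 1)/(-a)⌉₊ : ℚ) := Nat.le_ceil _
        have h2 : ((⌈(2*c + |d - k| + 1)/(-a)⌉₊ : ℚ)) ≤ (N : ℚ) := by
          exact_mod_cast Nat.le_max_right 1 _
        rw [hn]; push_cast; linarith
      have hkey : a * n + 2*c ≤ -(|d - k| + 1) := by
        have := (div_le_iff₀ (by linarith : (0:ℚ) < -a)).mp hnN
        nlinarith
      nlinarith [mul_le_mul_of_nonneg_left hkey (by linarith : (0:ℚ) ≤ n),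
        le_abs_self (d - k), abs_nonneg (d - k), hn1]
  · obtain ⟨s, hs0, hsc⟩ : ∃ s : ℤ, s ≠ 0 ∧ c * (s:ℚ) = -|c| := by
      rcases hc.lt_or_gt with h | h
      · exact ⟨1, one_ne_zero, by rw [abs_of_neg h]; push_cast; ring⟩
      · exact ⟨-1, by norm_num, by rw [abs_of_pos h]; push_cast; ring⟩
    have hcpos : 0 < |c| := abs_pos.mpr hc
    set N : ℕ := ⌈(d - k)/(2*|c|)⌉₊ with hN
    refine ⟨fun m => s * ((N : ℤ) + m), ?_, ?_⟩
    · intro m m' h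
      simp only at h
      have := mul_left_cancel₀ hs0 h
      omega
    · intro m
      simp only
      have hm : (0:ℚ) ≤ (m:ℚ) := Nat.cast_nonneg m
      have hX : d - k ≤ 2*|c| * ((N:ℚ) + m) := by
        have h1 := Nat.le_ceil ((d - k)/(2*|c|))
        have h2 := (div_le_iff₀ (by linarith : (0:ℚ) < 2*|c|)).mp h1
        nlinarith
      have hcast : ((s * ((N : ℤ) + m) : ℤ) : ℚ) = (s:ℚ) * ((N:ℚ) + m) := by push_cast; ring
      rw [ha, hcast]
      have hlin : 2*c*((s:ℚ) * ((N:ℚ)+m)) = -(2*|c|) * ((N:ℚ)+m) := by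
        have h3 : 2*c*((s:ℚ) * ((N:ℚ)+m)) = (c*(s:ℚ)) * (2*((N:ℚ)+m)) := by ring
        rw [h3, hsc]; ring
      rw [hlin]
      nlinarith

theorem coset_norm_le_infinite_of_not_posDef
    (L : Type*) [AddCommGroup L] [Module ℤ L]
    [Module.Free ℤ L] [Module.Finite ℤ L]
    (B : LinearMap.BilinForm ℤ L) (hsymm : ∀ x y : L, B x y = B y x)
    (hnondeg : ∀ x : L, (∀ y : L, B x y = 0) → x = 0)
    (heven : ∀ x : L, Even (B x x))
    (hnotpos : ¬ ∀ x : L, x ≠ 0 → 0 < B x x)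
    (lam : ℚ ⊗[ℤ] L) (k : ℚ) :
    {β : ℚ ⊗[ℤ] L |
        (∃ α : L, β = lam + (1 : ℚ) ⊗ₜ[ℤ] α) ∧
        (B.baseChange ℚ) β β ≤ k}.Infinite := by
  classical
  push_neg at hnotpos
  obtain ⟨x, hx0, hxle⟩ := hnotpos
  set Bq := B.baseChange ℚ with hBq
  have hinj : Function.Injective (fun l : L => (1:ℚ) ⊗ₜ[ℤ] l) := by
    intro l l' h
    let b := Module.Free.chooseBasis ℤ L
    apply b.repr.injective
    ext i
    have := congrArg (fun z => (b.baseChange ℚ).repr z i) h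
    simpa using this
  have hBs : B.IsSymm := ⟨fun u v => hsymm u v⟩
  have hQsymm : ∀ u v : ℚ ⊗[ℤ] L, Bq u v = Bq v u := by
    intro u v
    exact (LinearMap.BilinForm.IsSymm.baseChange ℚ (LinearMap.BilinForm.isSymm_iff.mp hBs)).eq u v
  have htm : ∀ (u v : L), Bq ((1:ℚ) ⊗ₜ u) ((1:ℚ) ⊗ₜ v) = (B u v : ℚ) := by
    intro u v
    rw [hBq, LinearMap.BilinForm.baseChange_tmul]
    simp
  set t : ℚ ⊗[ℤ] L := (1:ℚ) ⊗ₜ x with ht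
  set a : ℚ := (B x x : ℚ) with haa
  have hale : a ≤ 0 := by rw [haa]; exact_mod_cast hxle
  obtain ⟨v, hv⟩ : ∃ v : L, a < 0 ∨ (a = 0 ∧ Bq (lam + (1:ℚ) ⊗ₜ v) t ≠ 0) := by
    rcases lt_or_eq_of_le hale with hneg | hzero
    · exact ⟨0, Or.inl hneg⟩
    · by_cases hc : Bq lam t = 0
      · have hxney : ∃ y : L, B x y ≠ 0 := by
          by_contra hall
          push_neg at hall
          exact hx0 (hnondeg x hall)
        obtain ⟨y, hy⟩ := hxney
        refine ⟨y, Or.inr ⟨hzero, ?_⟩⟩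
        rw [map_add, LinearMap.add_apply, hc, zero_add, htm]
        rw [hsymm y x]
        exact_mod_cast hy
      · exact ⟨0, Or.inr ⟨hzero, by
          rwa [map_add, LinearMap.add_apply, htm, show B (0:L) x = 0 by simp,
            Int.cast_zero, add_zero]⟩⟩
  set w : ℚ ⊗[ℤ] L := lam + (1:ℚ) ⊗ₜ v with hw
  set c : ℚ := Bq w t with hcc
  set d : ℚ := Bq w w with hdd
  obtain ⟨g, hginj, hgle⟩ := exists_seq_aux' a c d k hv
  have htt : Bq t t = a := by rw [ht, htm, haa]
  have expand : ∀ n : ℤ, Bq (w + n • t) (w + n • t) = a * (n:ℚ)^2 + 2*c*(n:ℚ) + d := by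
    intro n
    simp only [map_add, LinearMap.add_apply, map_zsmul, LinearMap.smul_apply,
      smul_eq_mul, zsmul_eq_mul]
    rw [hQsymm t w, htt, ← hcc, ← hdd]
    ring
  apply Set.infinite_of_injective_forall_mem
    (f := fun m : ℕ => lam + (1:ℚ) ⊗ₜ[ℤ] (v + g m • x))
  · intro m m' h
    have h2 := hinj (add_left_cancel h)
    have h4 : g m • x = g m' • x := add_left_cancel h2
    have ht0 : t ≠ 0 := by
      rw [ht]
      intro hzero
      apply hx0
      apply hinj
      rw [show (fun l : L => (1:ℚ) ⊗ₜ[ℤ] l) x = (1:ℚ) ⊗ₜ[ℤ] x from rfl, hzero]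
      simp [TensorProduct.tmul_zero]
    have h5 : g m • t = g m' • t := by
      have e1 : (1:ℚ) ⊗ₜ[ℤ] (g m • x) = g m • t :=
        map_zsmul (TensorProduct.mk ℤ ℚ L 1) (g m) x
      have e2 : (1:ℚ) ⊗ₜ[ℤ] (g m' • x) = g m' • t :=
        map_zsmul (TensorProduct.mk ℤ ℚ L 1) (g m') x
      rw [← e1, ← e2, h4]
    have h6 : ((g m : ℚ)) • t = ((g m' : ℚ)) • t := by
      rw [Int.cast_smul_eq_zsmul, Int.cast_smul_eq_zsmul]; exact h5
    have h7 : (g m : ℚ) = (g m' : ℚ) := smul_left_injective ℚ ht0 h6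
    exact hginj (by exact_mod_cast h7)
  · intro m
    refine ⟨⟨v + g m • x, rfl⟩, ?_⟩
    have hrw : lam + (1:ℚ) ⊗ₜ[ℤ] (v + g m • x) = w + (g m) • t := by
      have hms : (1:ℚ) ⊗ₜ[ℤ] (g m • x) = g m • ((1:ℚ) ⊗ₜ[ℤ] x) :=
        map_zsmul (TensorProduct.mk ℤ ℚ L 1) (g m) x
      rw [hw, ht, TensorProduct.tmul_add, hms, add_assoc]
    show Bq _ _ ≤ k
    rw [hrw, expand (g m)]
    exact hgle m
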